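/- In OPol_n, the generating function identity E(t) = Π_{i=1}^n (1 + x_i t) = Σ_{k=0}^n (−1)^{binom(k,2)} e_k t^k holds, where t is a supercentral odd variable adjoined to OPol_n. -/

import Mathlib

/-- The `k`-th untwisted odd elementary symmetric polynomial
`e_k = Σ_{i_1<…<i_k} x_{i_1}⋯x_{i_k}`. -/
noncomputable def oddE {A : Type*} [Ring A] {n : ℕ} (x : Fin n → A) (k : ℕ) : A :=
  ∑ s ∈ Finset.powersetCard k (Finset.univ : Finset (Fin n)),
    ((Finset.sort s (· ≤ ·)).map x).prod

private lemma neg_one_pow_comm {A : Type*} [Ring A] (z : A) (n : ℕ) :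
    (-1 : A) ^ n * z = z * (-1 : A) ^ n :=
  ((Commute.neg_one_left z).pow_left n).eq

private lemma mul_neg_one_pow_mul {A : Type*} [Ring A] (a w : A) (c : ℕ) :
    a * ((-1 : A) ^ c * w) = (-1 : A) ^ c * (a * w) := by
  rw [← mul_assoc, ← neg_one_pow_comm, mul_assoc]

private lemma prod_anticomm {A : Type*} [Ring A] (t : A) :
    ∀ (l : List A), (∀ a ∈ l, a * t = -(t * a)) →
      t * l.prod = (-1 : A) ^ l.length * (l.prod * t)
  | [], _ => by simp
  | a :: l, h => by
    have ha : t * a = -(a * t) := by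
      rw [h a (List.mem_cons_self), neg_neg]
    have ih := prod_anticomm t l (fun b hb => h b (List.mem_cons_of_mem a hb))
    calc t * (a :: l).prod = (t * a) * l.prod := by
          rw [List.prod_cons, mul_assoc]
      _ = -(a * (t * l.prod)) := by rw [ha, neg_mul, mul_assoc]
      _ = -(a * ((-1 : A) ^ l.length * (l.prod * t))) := by rw [ih]
      _ = -((-1 : A) ^ l.length * (a * (l.prod * t))) := by rw [mul_neg_one_pow_mul]
      _ = (-1 : A) ^ (a :: l).length * ((a :: l).prod * t) := by
          simp only [List.length_cons, List.prod_cons, pow_succ, mul_assoc,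
            neg_one_mul, mul_neg, mul_one, neg_mul]

private lemma oddE_zero {A : Type*} [Ring A] {n : ℕ} (x : Fin n → A) :
    oddE x 0 = 1 := by
  simp [oddE]

private lemma oddE_big {A : Type*} [Ring A] {n : ℕ} (x : Fin n → A) :
    oddE x (n + 1) = 0 := by
  rw [oddE, Finset.powersetCard_eq_empty.mpr (by simp), Finset.sum_empty]

private lemma t_oddE {A : Type*} [Ring A] {n : ℕ} (y : Fin n → A) (t : A)
    (hyt : ∀ i, y i * t = -(t * y i)) (k : ℕ) :
    t * oddE y k = (-1 : A) ^ k * (oddE y k * t) := by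
  unfold oddE
  rw [Finset.mul_sum, Finset.sum_mul, Finset.mul_sum]
  refine Finset.sum_congr rfl fun s hs => ?_
  have hlen : ((Finset.sort s (· ≤ ·)).map y).length = k := by
    rw [List.length_map, Finset.length_sort, (Finset.mem_powersetCard.mp hs).2]
  rw [prod_anticomm t _ ?_, hlen]
  intro a ha
  rcases List.mem_map.mp ha with ⟨i, _, rfl⟩
  exact hyt i

private lemma sort_map_succ {n : ℕ} (s : Finset (Fin n)) :
    Finset.sort (s.map ⟨Fin.succ, Fin.succ_injective _⟩) (· ≤ ·) =
      (Finset.sort s (· ≤ ·)).map Fin.succ := by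
  have h := Multiset.map_sort (r := (· ≤ · : Fin n → Fin n → Prop))
    (r' := (· ≤ · : Fin (n + 1) → Fin (n + 1) → Prop)) Fin.succ s.val
    (fun a _ b _ => (Fin.succ_le_succ_iff).symm)
  simp only [Finset.sort, Finset.map_val, Function.Embedding.coeFn_mk]
  exact h.symm

private lemma oddE_succ {A : Type*} [Ring A] {n : ℕ} (x : Fin (n + 1) → A) (k : ℕ) :
    oddE x (k + 1) = oddE (x ∘ Fin.succ) (k + 1) + x 0 * oddE (x ∘ Fin.succ) k := by
  classical
  set f : Fin n ↪ Fin (n + 1) := ⟨Fin.succ, Fin.succ_injective _⟩ with hf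
  have h0 : (0 : Fin (n + 1)) ∉ (Finset.univ : Finset (Fin n)).map f := by
    simp [hf, Fin.succ_ne_zero, eq_comm]
  have huniv : (Finset.univ : Finset (Fin (n + 1))) =
      insert 0 ((Finset.univ : Finset (Fin n)).map f) := by
    rw [Fin.univ_succ, Finset.cons_eq_insert]
  rw [oddE, huniv, Finset.powersetCard_succ_insert h0]
  have hdisj : Disjoint
      (Finset.powersetCard (k + 1) ((Finset.univ : Finset (Fin n)).map f))
      ((Finset.powersetCard k ((Finset.univ : Finset (Fin n)).map f)).image (insert 0)) := by
    rw [Finset.disjoint_right]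
    intro s hs hs'
    rcases Finset.mem_image.mp hs with ⟨u, _, rfl⟩
    exact h0 ((Finset.mem_powersetCard.mp hs').1 (Finset.mem_insert_self 0 u))
  rw [Finset.sum_union hdisj]
  congr 1
  · -- subsets not containing 0
    rw [Finset.powersetCard_map, Finset.sum_map, oddE]
    refine Finset.sum_congr rfl fun s _ => ?_
    simp only [RelEmbedding.coe_toEmbedding, Finset.mapEmbedding_apply]
    rw [sort_map_succ, List.map_map]
  · -- subsets containing 0
    rw [Finset.sum_image ?_]
    · rw [Finset.powersetCard_map, Finset.sum_map, oddE, Finset.mul_sum]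
      refine Finset.sum_congr rfl fun s _ => ?_
      simp only [RelEmbedding.coe_toEmbedding, Finset.mapEmbedding_apply]
      have h0s : (0 : Fin (n + 1)) ∉ s.map f := by
        simp [hf, Fin.succ_ne_zero, eq_comm]
      rw [Finset.sort_insert (· ≤ ·) (fun b _ => Fin.zero_le b) h0s,
        List.map_cons, List.prod_cons, sort_map_succ, List.map_map]
    · intro a ha b hb hab
      have h0a : (0 : Fin (n + 1)) ∉ a :=
        fun h => h0 ((Finset.mem_powersetCard.mp ha).1 h)
      have h0b : (0 : Fin (n + 1)) ∉ b :=
        fun h => h0 ((Finset.mem_powersetCard.mp hb).1 h)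
      have := congrArg (Finset.erase · (0 : Fin (n + 1))) hab
      simpa [Finset.erase_insert, h0a, h0b] using this

/-- In `OPol_n` with a supercentral odd variable `t` adjoined
(`t` anticommutes with each `x_i`), the generating function identity
`E(t) = Π_{i=1}^n (1 + x_i t) = Σ_{k=0}^n (−1)^{C(k,2)} e_k t^k` holds. -/
theorem stmt2 {A : Type*} [Ring A] {n : ℕ} (x : Fin n → A)
    (hxx : ∀ i j, i ≠ j → x i * x j = -(x j * x i))
    (t : A) (hxt : ∀ i, x i * t = -(t * x i)) :
    ((List.finRange n).map fun i => 1 + x i * t).prod =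
      ∑ k ∈ Finset.range (n + 1), (-1 : A) ^ (k.choose 2) * (oddE x k * t ^ k) := by
  clear hxx
  induction n with
  | zero => simp [oddE_zero]
  | succ n ih =>
    set y : Fin n → A := x ∘ Fin.succ with hy
    have hyt : ∀ i, y i * t = -(t * y i) := fun i => hxt i.succ
    have IH := ih y hyt
    have hL : ((List.finRange (n + 1)).map fun i => 1 + x i * t).prod =
        (1 + x 0 * t) * ((List.finRange n).map fun i => 1 + y i * t).prod := by
      rw [List.finRange_succ, List.map_cons, List.prod_cons, List.map_map]
      rfl
    rw [hL, IH]
    rw [Finset.sum_range_succ' (fun k => (-1 : A) ^ (k.choose 2) * (oddE x k * t ^ k)) (n + 1)]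
    have h1 : (-1 : A) ^ (Nat.choose 0 2) * (oddE x 0 * t ^ 0) = 1 := by
      simp [oddE_zero]
    rw [h1]
    have hrec : ∀ k, oddE x (k + 1) = oddE y (k + 1) + x 0 * oddE y k := fun k =>
      oddE_succ x k
    have hsign : ∀ k : ℕ, ((k + 1).choose 2) = k.choose 2 + k := by
      intro k
      rw [Nat.choose_succ_succ, Nat.choose_one_right, Nat.add_comm]
    calc (1 + x 0 * t) * ∑ k ∈ Finset.range (n + 1),
          (-1 : A) ^ (k.choose 2) * (oddE y k * t ^ k)
        = (∑ k ∈ Finset.range (n + 1), (-1 : A) ^ (k.choose 2) * (oddE y k * t ^ k)) +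
          ∑ k ∈ Finset.range (n + 1),
            x 0 * t * ((-1 : A) ^ (k.choose 2) * (oddE y k * t ^ k)) := by
          rw [add_mul, one_mul, Finset.mul_sum]
      _ = (∑ k ∈ Finset.range (n + 1),
            (-1 : A) ^ ((k + 1).choose 2) * ((oddE y (k + 1)) * t ^ (k + 1)) + 1) +
          ∑ k ∈ Finset.range (n + 1),
            (-1 : A) ^ ((k + 1).choose 2) * ((x 0 * oddE y k) * t ^ (k + 1)) := by
          congr 1
          · -- reindex the first sum
            have h3 := Finset.sum_range_succ' (fun k =>
              (-1 : A) ^ (k.choose 2) * (oddE y k * t ^ k)) (n + 1)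
            rw [Finset.sum_range_succ (fun k =>
              (-1 : A) ^ (k.choose 2) * (oddE y k * t ^ k)) (n + 1), oddE_big] at h3
            simp only [zero_mul, mul_zero, add_zero] at h3
            rw [h3]
            simp [oddE_zero]
          · refine Finset.sum_congr rfl fun k _ => ?_
            have ht : t * oddE y k = (-1 : A) ^ k * (oddE y k * t) :=
              t_oddE y t hyt k
            calc x 0 * t * ((-1 : A) ^ (k.choose 2) * (oddE y k * t ^ k))
                = (-1 : A) ^ (k.choose 2) * (x 0 * (t * oddE y k) * t ^ k) := by
                  rw [mul_neg_one_pow_mul]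
                  simp only [mul_assoc]
              _ = (-1 : A) ^ (k.choose 2) *
                    (x 0 * ((-1 : A) ^ k * (oddE y k * t)) * t ^ k) := by rw [ht]
              _ = (-1 : A) ^ ((k + 1).choose 2) * ((x 0 * oddE y k) * t ^ (k + 1)) := by
                  rw [mul_neg_one_pow_mul, hsign, pow_add]
                  simp only [mul_assoc, pow_succ']
      _ = (∑ k ∈ Finset.range (n + 1),
            (-1 : A) ^ ((k + 1).choose 2) * (oddE x (k + 1) * t ^ (k + 1))) + 1 := by
          rw [add_right_comm, ← Finset.sum_add_distrib]
          congr 1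
          refine Finset.sum_congr rfl fun k _ => ?_
          rw [hrec k, add_mul, mul_add]
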